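/- In Cumulative Rejection Sampling, if each M-subset M of [N] is chosen with probability (1/binom(N−1,M−1))·Σ_{j∈M} p_j where Σ_i p_i = 1, and each selected member receives voting power 1/M, then the expected voting power of participant i equals p_i/M + (1−p_i)(M−1)/(M(N−1)). -/

import Mathlib

open Finset
lemma sum_filter_mem {α : Type*} [DecidableEq α] (s : Finset α) (a : α) (has : a ∈ s) (k : ℕ)
    (f : Finset α → ℝ) :
    ∑ t ∈ (s.powersetCard (k+1)).filter (a ∈ ·), f t
      = ∑ t ∈ (s.erase a).powersetCard k, f (insert a t) := by
  refine Finset.sum_nbij' (fun t => t.erase a) (fun t => insert a t) ?_ ?_ ?_ ?_ ?_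
  · intro t ht
    rw [Finset.mem_filter, Finset.mem_powersetCard] at ht
    rw [Finset.mem_powersetCard]
    refine ⟨?_, ?_⟩
    · intro x hx
      rw [Finset.mem_erase] at hx ⊢
      exact ⟨hx.1, ht.1.1 hx.2⟩
    · rw [Finset.card_erase_of_mem ht.2, ht.1.2]; omega
  · intro t ht
    rw [Finset.mem_powersetCard] at ht
    have ha : a ∉ t := fun h => (Finset.mem_erase.mp (ht.1 h)).1 rfl
    rw [Finset.mem_filter, Finset.mem_powersetCard]
    refine ⟨⟨?_, ?_⟩, Finset.mem_insert_self a t⟩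
    · intro x hx
      rcases Finset.mem_insert.mp hx with h | h
      · exact h ▸ has
      · exact (Finset.erase_subset a s) (ht.1 h)
    · rw [Finset.card_insert_of_notMem ha, ht.2]
  · intro t ht
    rw [Finset.mem_filter] at ht
    exact Finset.insert_erase ht.2
  · intro t ht
    rw [Finset.mem_powersetCard] at ht
    have ha : a ∉ t := fun h => (Finset.mem_erase.mp (ht.1 h)).1 rfl
    exact Finset.erase_insert ha
  · intro t ht
    rw [Finset.mem_filter] at ht
    rw [Finset.insert_erase ht.2]

lemma double_sum_powersetCard {α : Type*} [DecidableEq α] (s : Finset α) (k : ℕ)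
    (p : α → ℝ) :
    ∑ t ∈ s.powersetCard (k+1), ∑ j ∈ t, p j
      = ((s.card - 1).choose k : ℝ) * ∑ j ∈ s, p j := by
  have h1 : ∀ t ∈ s.powersetCard (k+1), ∑ j ∈ t, p j = ∑ j ∈ s, if j ∈ t then p j else 0 := by
    intro t ht
    rw [← Finset.sum_filter, Finset.filter_mem_eq_inter,
      Finset.inter_eq_right.mpr (Finset.mem_powersetCard.mp ht).1]
  rw [Finset.sum_congr rfl h1, Finset.sum_comm, Finset.mul_sum]
  refine Finset.sum_congr rfl fun j hj => ?_
  rw [← Finset.sum_filter]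
  have := sum_filter_mem s j hj k (fun _ => p j)
  rw [this, Finset.sum_const, Finset.card_powersetCard, Finset.card_erase_of_mem hj,
    nsmul_eq_mul, mul_comm]


/-- under the distribution P(𝓜) = (1/C(N−1,M−1))·Σ_{j∈𝓜} p_j on M-subsets,
with each selected member receiving voting power 1/M, the expected voting power of
participant i equals p_i/M + (1−p_i)(M−1)/(M(N−1)). -/
theorem stmt_5 (N M : ℕ) (hM : 2 < M) (hMN : M < N) (p : Fin N → ℝ)
    (hp : ∀ i, 0 ≤ p i) (hpsum : ∑ i, p i = 1) (i : Fin N) :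
    ∑ 𝓜 ∈ Finset.univ.powersetCard M,
        ((1 / ((N - 1).choose (M - 1) : ℝ)) * ∑ j ∈ 𝓜, p j) *
          (if i ∈ 𝓜 then (1 / M : ℝ) else 0)
      = p i / M + (1 - p i) * (M - 1) / (M * (N - 1)) := by
  set C1 : ℝ := ((N - 1).choose (M - 1) : ℝ) with hC1
  have hM1 : M - 1 + 1 = M := by omega
  have hM2 : M - 2 + 1 = M - 1 := by omega
  have hiu : i ∈ (Finset.univ : Finset (Fin N)) := Finset.mem_univ i
  -- Step 1: filter
  have step1 : ∑ 𝓜 ∈ Finset.univ.powersetCard M,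
      ((1 / C1) * ∑ j ∈ 𝓜, p j) * (if i ∈ 𝓜 then (1 / M : ℝ) else 0)
      = ∑ 𝓜 ∈ (Finset.univ.powersetCard M).filter (i ∈ ·),
          ((1 / C1) * ∑ j ∈ 𝓜, p j) * (1 / M) := by
    rw [Finset.sum_filter]
    refine Finset.sum_congr rfl fun t _ => ?_
    by_cases h : i ∈ t <;> simp [h]
  rw [step1]
  have step2 : ∑ 𝓜 ∈ (Finset.univ.powersetCard M).filter (i ∈ ·),
      ((1 / C1) * ∑ j ∈ 𝓜, p j) * (1 / M)
      = ∑ t ∈ ((Finset.univ : Finset (Fin N)).erase i).powersetCard (M-1),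
          ((1 / C1) * ∑ j ∈ insert i t, p j) * (1 / M) := by
    have h := sum_filter_mem (Finset.univ : Finset (Fin N)) i hiu (M-1)
      (fun t => ((1 / C1) * ∑ j ∈ t, p j) * (1 / M))
    rw [hM1] at h
    exact h
  rw [step2]
  set s := (Finset.univ : Finset (Fin N)).erase i with hs
  have hsc : s.card = N - 1 := by
    rw [hs, Finset.card_erase_of_mem hiu, Finset.card_univ, Fintype.card_fin]
  have hins : ∀ t ∈ s.powersetCard (M-1), ∑ j ∈ insert i t, p j = p i + ∑ j ∈ t, p j := by
    intro t ht
    have hit : i ∉ t := fun h =>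
      (Finset.mem_erase.mp ((Finset.mem_powersetCard.mp ht).1 h)).1 rfl
    rw [Finset.sum_insert hit]
  have hps : ∑ j ∈ s, p j = 1 - p i := by
    have := Finset.add_sum_erase _ p hiu
    rw [hpsum] at this
    linarith [this]
  have hcard : (s.powersetCard (M-1)).card = (N-1).choose (M-1) := by
    rw [Finset.card_powersetCard, hsc]
  have hdouble : ∑ t ∈ s.powersetCard (M-1), ∑ j ∈ t, p j
      = ((N - 2).choose (M-2) : ℝ) * (1 - p i) := by
    rw [← hM2, double_sum_powersetCard s (M-2) p, hsc, hps,
      show N - 1 - 1 = N - 2 from by omega]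
  have step3 : ∑ t ∈ s.powersetCard (M-1), ((1 / C1) * ∑ j ∈ insert i t, p j) * (1 / M)
      = (1 / C1) * (1 / M) * (C1 * p i + ((N - 2).choose (M-2) : ℝ) * (1 - p i)) := by
    calc ∑ t ∈ s.powersetCard (M-1), ((1 / C1) * ∑ j ∈ insert i t, p j) * (1 / M)
        = ∑ t ∈ s.powersetCard (M-1), (1 / C1) * (1 / M) * (p i + ∑ j ∈ t, p j) := by
          refine Finset.sum_congr rfl fun t ht => ?_
          rw [hins t ht]; ring
      _ = (1 / C1) * (1 / M) * ∑ t ∈ s.powersetCard (M-1), (p i + ∑ j ∈ t, p j) := by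
          rw [Finset.mul_sum]
      _ = _ := by
          rw [Finset.sum_add_distrib, Finset.sum_const, hcard, hdouble, nsmul_eq_mul, hC1]
  rw [step3]
  -- final arithmetic
  have hC1pos : 0 < (N-1).choose (M-1) := Nat.choose_pos (by omega)
  have hC1ne : C1 ≠ 0 := by
    rw [hC1]; exact_mod_cast hC1pos.ne'
  have hMne : (M : ℝ) ≠ 0 := by positivity
  have hNne : (N : ℝ) - 1 ≠ 0 := by
    have : (4:ℝ) ≤ N := by exact_mod_cast (by omega : 4 ≤ N)
    linarith
  have hid : ((M-1) * (N-1).choose (M-1) : ℕ) = ((N-1) * (N-2).choose (M-2) : ℕ) := by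
    have := Nat.add_one_mul_choose_eq (N-2) (M-2)
    have h1 : N - 2 + 1 = N - 1 := by omega
    have h2 : M - 2 + 1 = M - 1 := by omega
    rw [h1, h2] at this
    rw [mul_comm]
    exact this.symm
  have hidR : ((M:ℝ) - 1) * C1 = ((N:ℝ) - 1) * ((N - 2).choose (M-2) : ℝ) := by
    have := congrArg (Nat.cast : ℕ → ℝ) hid
    push_cast at this
    have hm : ((M - 1 : ℕ) : ℝ) = (M:ℝ) - 1 := by
      have : (1:ℕ) ≤ M := by omega
      push_cast [this]; ring
    have hn : ((N - 1 : ℕ) : ℝ) = (N:ℝ) - 1 := by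
      have : (1:ℕ) ≤ N := by omega
      push_cast [this]; ring
    rw [hm, hn] at this
    rw [hC1]
    linarith [this]
  field_simp
  linear_combination (p i - 1) * hidR
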